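/- Let G be an abelian group and let a, b be positive integers. Suppose the map g ↦ g^a is surjective on G, and that the subgroups K_c := {g ∈ G : g^c = 1} are finite for c = a and c = b. Then K_{ab} is finite and |K_{ab}| = |K_a| · |K_b|. -/

import Mathlib

/-- Let `G` be an abelian group and `a, b` positive integers. If `g ↦ g ^ a`
is surjective on `G` and the torsion subgroups `K_a = {g | g ^ a = 1}` and `K_b = {g | g ^ b = 1}`
are finite, then `K_{ab}` is finite with `|K_{ab}| = |K_a| ⬝ |K_b|`. -/
theorem stmt2 {G : Type*} [CommGroup G] (a b : ℕ) (ha : 0 < a) (hb : 0 < b)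
    (hsurj : Function.Surjective (fun g : G => g ^ a))
    (hKa : {g : G | g ^ a = 1}.Finite) (hKb : {g : G | g ^ b = 1}.Finite) :
    {g : G | g ^ (a * b) = 1}.Finite ∧
      Nat.card {g : G | g ^ (a * b) = 1} =
        Nat.card {g : G | g ^ a = 1} * Nat.card {g : G | g ^ b = 1} := by
  -- Finiteness of K_{ab}
  have hfin : {g : G | g ^ (a * b) = 1}.Finite := by
    have hsub : {g : G | g ^ (a * b) = 1} ⊆
        ⋃ h ∈ {g : G | g ^ b = 1}, {g : G | g ^ a = h} := by
      intro g hg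
      simp only [Set.mem_iUnion, Set.mem_setOf_eq]
      exact ⟨g ^ a, by simpa [← pow_mul] using hg, rfl⟩
    refine (Set.Finite.biUnion hKb ?_).subset hsub
    intro h _
    rcases Set.eq_empty_or_nonempty {g : G | g ^ a = h} with he | ⟨g0, hg0⟩
    · simp [he]
    · refine (hKa.image (fun x => g0 * x)).subset ?_
      intro x hx
      simp only [Set.mem_setOf_eq] at hx hg0
      refine ⟨g0⁻¹ * x, ?_, by group⟩
      simp only [Set.mem_setOf_eq, mul_pow, inv_pow, hg0, hx, inv_mul_cancel]
  refine ⟨hfin, ?_⟩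
  -- Subgroup setup
  set Kab := (powMonoidHom (a * b) : G →* G).ker with hKabdef
  set Kb' := (powMonoidHom b : G →* G).ker with hKbdef
  have hKabset : {g : G | g ^ (a * b) = 1} = (Kab : Set G) := by
    ext g; simp [hKabdef, MonoidHom.mem_ker, powMonoidHom_apply]
  have hKbset : {g : G | g ^ b = 1} = (Kb' : Set G) := by
    ext g; simp [hKbdef, MonoidHom.mem_ker, powMonoidHom_apply]
  -- the homomorphism ψ : Kab → Kb, g ↦ g^a
  have hmaps : ∀ g : Kab, (g : G) ^ a ∈ Kb' := by
    intro g
    have hg : (g : G) ^ (a * b) = 1 := g.2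
    simp only [hKbdef, MonoidHom.mem_ker, powMonoidHom_apply]
    rw [← pow_mul]; exact hg
  let ψ : Kab →* Kb' :=
    ((powMonoidHom a : G →* G).domRestrict Kab).codRestrict Kb' (fun g => hmaps g)
  have hψsurj : Function.Surjective ψ := by
    rintro ⟨h, hh⟩
    obtain ⟨g, hg⟩ := hsurj h
    simp only at hg
    have hgmem : g ∈ Kab := by
      simp only [hKabdef, MonoidHom.mem_ker, powMonoidHom_apply]
      rw [pow_mul, hg]
      simpa [hKbdef, MonoidHom.mem_ker, powMonoidHom_apply] using hh
    exact ⟨⟨g, hgmem⟩, Subtype.ext hg⟩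
  -- kernel of ψ is K_a
  have hkerequiv : ψ.ker ≃ {g : G | g ^ a = 1} := by
    refine ⟨fun x => ⟨x.1.1, ?_⟩, fun y => ⟨⟨y, ?_⟩, ?_⟩, ?_, ?_⟩
    · have hx := x.2
      simp only [MonoidHom.mem_ker, ψ] at hx
      exact congrArg Subtype.val hx
    · have hy : (y : G) ^ a = 1 := y.2
      simp only [hKabdef, MonoidHom.mem_ker, powMonoidHom_apply]
      rw [pow_mul, hy, one_pow]
    · have hy : (y : G) ^ a = 1 := y.2
      simp only [MonoidHom.mem_ker, ψ]
      exact Subtype.ext (by exact hy)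
    · intro x; ext; rfl
    · intro y; rfl
  -- counting
  have hfinKab : Finite Kab := by
    rw [← hKabset] at *
    exact hfin
  have hcard : Nat.card Kab = Nat.card (Kab ⧸ ψ.ker) * Nat.card ψ.ker :=
    Subgroup.card_eq_card_quotient_mul_card_subgroup ψ.ker
  have hquot : Nat.card (Kab ⧸ ψ.ker) = Nat.card Kb' :=
    Nat.card_congr (QuotientGroup.quotientKerEquivOfSurjective ψ hψsurj).toEquiv
  have h1 : Nat.card {g : G | g ^ (a * b) = 1} = Nat.card Kab := by
    rw [hKabset]; rfl
  have h2 : Nat.card {g : G | g ^ b = 1} = Nat.card Kb' := by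
    rw [hKbset]; rfl
  have h3 : Nat.card ψ.ker = Nat.card {g : G | g ^ a = 1} := Nat.card_congr hkerequiv
  rw [h1, hcard, hquot, h3, h2, mul_comm]
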